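/- Schur complement of the saddle-point Jacobian is a weighted Laplacian: let σ ∈ ℝ^m, u ∈ ℝ^n, Δt > 0, set μ = σ²/4 and g = G u, and assume 1 − (Δt/4)(g_e² − 1) > 0 for every e. With A = E Diag(μ) G, B = ½ Diag(g ⊙ σ) Eᵀ and C = Diag( w ⊙ ( 1/Δt − ¼(g² − 1) ) ) (which is invertible), the Schur complement S = A + Bᵀ C⁻¹ B satisfies S = E Diag(μ̄) W⁻¹ Eᵀ, where μ̄ ∈ ℝ^m has entries μ̄_e = μ_e + Δt (½ σ_e g_e)² / ( 1 − (Δt/4)(g_e² − 1) ). -/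

import Mathlib

open Matrix BigOperators

set_option maxHeartbeats 800000 in
/-- Schur complement of the saddle-point Jacobian is a weighted Laplacian: with
`μ = σ²/4`, `g = G u`, and `1 − (Δt/4)(g_e² − 1) > 0` for all `e`, the matrix
`C = Diag(w ⊙ (1/Δt − ¼(g² − 1)))` is invertible and the Schur complement
`S = A + Bᵀ C⁻¹ B` equals `E Diag(μ̄) W⁻¹ Eᵀ` where
`μ̄_e = μ_e + Δt (½ σ_e g_e)² / (1 − (Δt/4)(g_e² − 1))`.
Here `G = W⁻¹Eᵀ`, `A = E Diag(μ) G`, `B = ½ Diag(g ⊙ σ) Eᵀ`. -/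
theorem schur_complement_weighted_laplacian {n m : ℕ} (hn : 0 < n) (hm : 0 < m)
    (E : Matrix (Fin n) (Fin m) ℝ) (w : Fin m → ℝ) (hw : ∀ e, 0 < w e)
    (G : Matrix (Fin m) (Fin n) ℝ) (hG : G = (Matrix.diagonal w)⁻¹ * Eᵀ)
    (σ : Fin m → ℝ) (u : Fin n → ℝ) (Δt : ℝ) (hΔt : 0 < Δt)
    (μ : Fin m → ℝ) (hμ : μ = fun e => (σ e)^2 / 4)
    (g : Fin m → ℝ) (hg : g = G.mulVec u)
    (hpos : ∀ e, 0 < 1 - (Δt/4) * ((g e)^2 - 1))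
    (A : Matrix (Fin n) (Fin n) ℝ) (hA : A = E * Matrix.diagonal μ * G)
    (B : Matrix (Fin m) (Fin n) ℝ)
    (hB : B = (1/2 : ℝ) • (Matrix.diagonal (fun e => g e * σ e) * Eᵀ))
    (C : Matrix (Fin m) (Fin m) ℝ)
    (hC : C = Matrix.diagonal (fun e => w e * (1/Δt - (1/4) * ((g e)^2 - 1))))
    (μbar : Fin m → ℝ)
    (hμbar : μbar = fun e =>
      μ e + Δt * ((1/2) * σ e * g e)^2 / (1 - (Δt/4) * ((g e)^2 - 1))) :
    IsUnit C ∧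
    A + Bᵀ * C⁻¹ * B = E * Matrix.diagonal μbar * (Matrix.diagonal w)⁻¹ * Eᵀ := by
  have hc : ∀ e : Fin m, (1/Δt - (1/4) * ((g e)^2 - 1)) ≠ 0 := by
    intro e
    have h1 : Δt * (1/Δt) = 1 := by field_simp
    nlinarith [hpos e, hΔt]
  have hwc : ∀ e : Fin m, w e * (1/Δt - (1/4) * ((g e)^2 - 1)) ≠ 0 := fun e =>
    mul_ne_zero (hw e).ne' (hc e)
  have hCunit : IsUnit C := by
    rw [hC, Matrix.isUnit_iff_isUnit_det, Matrix.det_diagonal]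
    exact isUnit_iff_ne_zero.mpr (Finset.prod_ne_zero_iff.mpr fun e _ => hwc e)
  refine ⟨hCunit, ?_⟩
  have hWinv : (Matrix.diagonal w)⁻¹ = Matrix.diagonal (fun e => (w e)⁻¹) :=
    Matrix.inv_eq_right_inv (by
      rw [Matrix.diagonal_mul_diagonal, ← Matrix.diagonal_one,
        Matrix.diagonal_eq_diagonal_iff]
      exact fun e => mul_inv_cancel₀ (hw e).ne')
  have hCinv : C⁻¹ = Matrix.diagonal
      (fun e => (w e * (1/Δt - (1/4) * ((g e)^2 - 1)))⁻¹) := by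
    rw [hC]
    exact Matrix.inv_eq_right_inv (by
      rw [Matrix.diagonal_mul_diagonal, ← Matrix.diagonal_one,
        Matrix.diagonal_eq_diagonal_iff]
      exact fun e => mul_inv_cancel₀ (hwc e))
  have key : ∀ (a b c : Fin m → ℝ),
      (E * Matrix.diagonal a) * Matrix.diagonal b * (Matrix.diagonal c * Eᵀ)
        = E * Matrix.diagonal (fun e => a e * b e * c e) * Eᵀ := by
    intro a b c
    rw [Matrix.mul_assoc E, Matrix.diagonal_mul_diagonal, Matrix.mul_assoc E,
      ← Matrix.mul_assoc (Matrix.diagonal _), Matrix.diagonal_mul_diagonal,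
      ← Matrix.mul_assoc]
  have hB' : B = Matrix.diagonal (fun e => (1/2:ℝ) * (g e * σ e)) * Eᵀ := by
    rw [hB, show (fun e => (1/2:ℝ) * (g e * σ e)) = (1/2:ℝ) • (fun e => g e * σ e) from rfl,
      Matrix.diagonal_smul]
    exact (Matrix.smul_mul ((1:ℝ)/2) _ Eᵀ).symm
  have hBt : Bᵀ = E * Matrix.diagonal (fun e => (1/2:ℝ) * (g e * σ e)) := by
    rw [hB', Matrix.transpose_mul, Matrix.transpose_transpose, Matrix.diagonal_transpose]
  have hA' : A = E * Matrix.diagonal (fun e => μ e * (w e)⁻¹) * Eᵀ := by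
    rw [hA, hG, hWinv, ← Matrix.mul_assoc, Matrix.mul_assoc E,
      Matrix.diagonal_mul_diagonal]
  have hS : Bᵀ * C⁻¹ * B = E * Matrix.diagonal
      (fun e => (1/2:ℝ) * (g e * σ e) * (w e * (1/Δt - (1/4) * ((g e)^2 - 1)))⁻¹
        * ((1/2:ℝ) * (g e * σ e))) * Eᵀ := by
    rw [hBt, hCinv, hB', key]
  rw [hA', hS, hWinv, Matrix.mul_assoc E (Matrix.diagonal μbar),
    Matrix.diagonal_mul_diagonal, ← Matrix.add_mul, ← Matrix.mul_add,
    Matrix.diagonal_add]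
  congr 1
  congr 1
  rw [Matrix.diagonal_eq_diagonal_iff]
  intro e
  have hde : (1 - (Δt/4) * ((g e)^2 - 1)) ≠ 0 := (hpos e).ne'
  rw [hμbar]
  simp only [Pi.add_apply]
  have hwe : w e ≠ 0 := (hw e).ne'
  have h16 : (16 : ℝ) - g e ^ 2 * Δt * 4 + Δt * 4 ≠ 0 := by nlinarith [hpos e]
  field_simp
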